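/- For every a > 0, the operator norm of T_{a^c} on L²(π) satisfies ‖T_{a^c}‖ ≤ β_a, where β_a := ∫_{−s}^{s} sup_{|x|>a} √(t(x,x+u)·t(x+u,x)) du. -/

import Mathlib

open MeasureTheory Filter Topology
open scoped ENNReal NNReal

noncomputable section

/-- The probability measure on `ℝ` with density `π` w.r.t. Lebesgue measure. -/
def piMeas (π : ℝ → ℝ) : Measure ℝ := volume.withDensity fun x => ENNReal.ofReal (π x)

/-- `t(x,y) = min(q(x,y), π(y) q(y,x) / π(x))`. -/
def mhT (π : ℝ → ℝ) (q : ℝ → ℝ → ℝ) (x y : ℝ) : ℝ := min (q x y) (π y * q y x / π x)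

/-- The rejection probability `r(x) = 1 - ∫ t(x,y) dy`. -/
def mhR (π : ℝ → ℝ) (q : ℝ → ℝ → ℝ) (x : ℝ) : ℝ := 1 - ∫ y, mhT π q x y

set_option maxHeartbeats 1000000 in
private lemma schur_helper
    (π : ℝ → ℝ) (hπpos : ∀ x, 0 < π x) (hπcont : Continuous π)
    (a : ℝ) (t : ℝ → ℝ → ℝ) (ht_nonneg : ∀ x y, 0 ≤ t x y)
    (g : ℝ → ℝ) (hg_nonneg : ∀ u, 0 ≤ g u) (hgmeas : Measurable g)
    (htb : ∀ x u, a < |x| → t x (x + u) ≤ g u * Real.sqrt (π (x + u) / π x))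
    (hBne : (∫⁻ u, ENNReal.ofReal (g u)) ≠ ⊤)
    (f₀ : ℝ → ℂ) (hf₀ : Measurable f₀)
    (hNne : (∫⁻ x, (‖f₀ x‖₊ : ℝ≥0∞) ^ (2:ℝ) ∂(piMeas π)) ≠ ⊤) :
    eLpNorm (fun x => if a < |x| then (∫ y, (t x y : ℂ) * f₀ y) else 0) 2 (piMeas π)
      ≤ (∫⁻ u, ENNReal.ofReal (g u)) *
        (∫⁻ x, (‖f₀ x‖₊ : ℝ≥0∞) ^ (2:ℝ) ∂(piMeas π)) ^ (1/2 : ℝ) := by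
  set π' : ℝ → ℝ≥0∞ := fun x => ENNReal.ofReal (π x) with hπ'def
  have hπ'meas : Measurable π' := hπcont.measurable.ennreal_ofReal
  have hμd : piMeas π = volume.withDensity π' := rfl
  set g' : ℝ → ℝ≥0∞ := fun u => ENNReal.ofReal (g u) with hg'def
  have hg'meas : Measurable g' := hgmeas.ennreal_ofReal
  set φ : ℝ → ℝ≥0∞ := fun x => (‖f₀ x‖₊ : ℝ≥0∞) with hφdef
  have hφmeas : Measurable φ := hf₀.nnnorm.coe_nnreal_ennreal
  set G₀ : ℝ → ℂ := fun x => if a < |x| then (∫ y, (t x y : ℂ) * f₀ y) else 0 with hG₀def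
  set T' : ℝ → ℝ → ℝ≥0∞ := fun x y => ENNReal.ofReal (t x y) with hT'def
  set R : ℝ → ℝ → ℝ≥0∞ := fun x u => ENNReal.ofReal (Real.sqrt (π (x + u) / π x)) with hRdef
  have hRcont : Continuous fun p : ℝ × ℝ => R p.1 p.2 := by
    refine ENNReal.continuous_ofReal.comp ?_
    exact (((hπcont.comp (continuous_fst.add continuous_snd)).div
      (hπcont.comp continuous_fst) fun p => (hπpos p.1).ne')).sqrt
  set W : ℝ → ℝ≥0∞ := fun x =>
    ∫⁻ u, g' u * (R x u ^ (2:ℝ) * φ (x + u) ^ (2:ℝ)) with hWdef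
  have hJmeas : Measurable fun p : ℝ × ℝ =>
      g' p.2 * (R p.1 p.2 ^ (2:ℝ) * φ (p.1 + p.2) ^ (2:ℝ)) := by
    refine (hg'meas.comp measurable_snd).mul ?_
    exact (hRcont.measurable.pow_const _).mul
      ((hφmeas.comp (measurable_fst.add measurable_snd)).pow_const _)
  have hWmeas : Measurable W := hJmeas.lintegral_prod_right'
  set N : ℝ≥0∞ := ∫⁻ x, φ x ^ (2:ℝ) ∂(piMeas π) with hNdef
  set B : ℝ≥0∞ := ∫⁻ u, g' u with hBdef
  have hhalf : ∀ z : ℝ≥0∞, (z ^ (1/2 : ℝ)) ^ (2:ℝ) = z := by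
    intro z
    rw [← ENNReal.rpow_mul]
    norm_num
  have hpt : ∀ x, (‖G₀ x‖₊ : ℝ≥0∞) ^ (2:ℝ) ≤ B * W x := by
    intro x
    by_cases hx : a < |x|
    · have e1 : (‖G₀ x‖₊ : ℝ≥0∞) ≤ ∫⁻ u, T' x (x + u) * φ (x + u) := by
        have b1 : (‖G₀ x‖₊ : ℝ≥0∞) ≤ ∫⁻ y, ENNReal.ofReal ‖(t x y : ℂ) * f₀ y‖ := by
          rw [← enorm_eq_nnnorm, ← ofReal_norm]
          refine le_trans (ENNReal.ofReal_le_ofReal ?_) ENNReal.ofReal_toReal_le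
          simp only [hG₀def]
          rw [if_pos hx]
          exact norm_integral_le_lintegral_norm _
        refine b1.trans_eq ?_
        have hb2 : ∀ y, ENNReal.ofReal ‖(t x y : ℂ) * f₀ y‖ = T' x y * φ y := by
          intro y
          rw [norm_mul, Complex.norm_real, Real.norm_eq_abs, abs_of_nonneg (ht_nonneg x y),
            ENNReal.ofReal_mul (ht_nonneg x y), ofReal_norm, enorm_eq_nnnorm]
        simp_rw [hb2]
        exact (lintegral_add_left_eq_self (fun y => T' x y * φ y) x).symm
      have e2 : (∫⁻ u, T' x (x + u) * φ (x + u)) ≤ ∫⁻ u, g' u * (R x u * φ (x + u)) := by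
        refine lintegral_mono fun u => ?_
        calc T' x (x + u) * φ (x + u)
            ≤ ENNReal.ofReal (g u * Real.sqrt (π (x + u) / π x)) * φ (x + u) :=
              mul_le_mul_left (ENNReal.ofReal_le_ofReal (htb x u hx)) _
          _ = g' u * (R x u * φ (x + u)) := by
              rw [ENNReal.ofReal_mul (hg_nonneg u), mul_assoc]
      have e3 : (∫⁻ u, g' u * (R x u * φ (x + u))) ≤ B ^ (1/2:ℝ) * (W x) ^ (1/2:ℝ) := by
        have hconj : Real.HolderConjugate 2 2 := ⟨by norm_num, by norm_num, by norm_num⟩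
        have hRxu : Measurable fun u : ℝ => R x u := by
          simp only [hRdef]
          exact (ENNReal.continuous_ofReal.comp
            (((hπcont.comp (continuous_const.add continuous_id)).div continuous_const
              fun _ => (hπpos x).ne').sqrt)).measurable
        have hφx : Measurable fun u : ℝ => φ (x + u) :=
          hφmeas.comp (measurable_const.add measurable_id)
        have h := ENNReal.lintegral_mul_le_Lp_mul_Lq volume hconj
          (f := fun u => g' u ^ (1/2:ℝ))
          (g := fun u => g' u ^ (1/2:ℝ) * (R x u * φ (x + u)))
          ((hg'meas.pow_const _).aemeasurable)
          (((hg'meas.pow_const _).mul (hRxu.mul hφx)).aemeasurable)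
        have hL : ∀ u : ℝ, g' u ^ (1/2:ℝ) * (g' u ^ (1/2:ℝ) * (R x u * φ (x + u)))
            = g' u * (R x u * φ (x + u)) := by
          intro u
          rw [← mul_assoc, ← ENNReal.rpow_add_of_nonneg _ _ (by norm_num) (by norm_num)]
          norm_num
        have hR2 : ∀ u : ℝ, (g' u ^ (1/2:ℝ) * (R x u * φ (x + u))) ^ (2:ℝ)
            = g' u * (R x u ^ (2:ℝ) * φ (x + u) ^ (2:ℝ)) := by
          intro u
          rw [ENNReal.mul_rpow_of_nonneg _ _ (by norm_num : (0:ℝ) ≤ 2),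
            ENNReal.mul_rpow_of_nonneg _ _ (by norm_num : (0:ℝ) ≤ 2), hhalf (g' u)]
        simp only [Pi.mul_apply] at h
        calc (∫⁻ u, g' u * (R x u * φ (x + u)))
            = ∫⁻ u, g' u ^ (1/2:ℝ) * (g' u ^ (1/2:ℝ) * (R x u * φ (x + u))) := by
              simp_rw [hL]
          _ ≤ _ := h
          _ = B ^ (1/2:ℝ) * (W x) ^ (1/2:ℝ) := by
              simp_rw [hR2, hhalf]
              rfl
      have e4 := ENNReal.rpow_le_rpow (le_trans e1 (le_trans e2 e3))
        (by norm_num : (0:ℝ) ≤ 2)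
      calc (‖G₀ x‖₊ : ℝ≥0∞) ^ (2:ℝ) ≤ (B ^ (1/2:ℝ) * W x ^ (1/2:ℝ)) ^ (2:ℝ) := e4
        _ = B * W x := by
            rw [ENNReal.mul_rpow_of_nonneg _ _ (by norm_num : (0:ℝ) ≤ 2), hhalf, hhalf]
    · have h0 : G₀ x = 0 := by
        simp only [hG₀def]
        rw [if_neg hx]
      rw [h0, nnnorm_zero, ENNReal.coe_zero,
        ENNReal.zero_rpow_of_pos (by norm_num : (0:ℝ) < 2)]
      exact zero_le
  have main : (∫⁻ x, (‖G₀ x‖₊ : ℝ≥0∞) ^ (2:ℝ) ∂(piMeas π)) ≤ B * (B * N) := by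
    have c1 : (∫⁻ x, (‖G₀ x‖₊ : ℝ≥0∞) ^ (2:ℝ) ∂(piMeas π))
        ≤ ∫⁻ x, B * W x ∂(piMeas π) := lintegral_mono hpt
    have c2 : ∫⁻ x, B * W x ∂(piMeas π) = B * ∫⁻ x, W x ∂(piMeas π) :=
      lintegral_const_mul' B W hBne
    have c3 : ∫⁻ x, W x ∂(piMeas π) = ∫⁻ x, π' x * W x := by
      rw [hμd, lintegral_withDensity_eq_lintegral_mul volume hπ'meas hWmeas]
      rfl
    have c4 : (∫⁻ x, π' x * W x)
        = ∫⁻ x, ∫⁻ u, π' x * (g' u * (R x u ^ (2:ℝ) * φ (x + u) ^ (2:ℝ))) := by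
      refine lintegral_congr fun x => ?_
      simp only [hWdef]
      exact (lintegral_const_mul' (π' x) _ ENNReal.ofReal_ne_top).symm
    have c5 : (∫⁻ x, ∫⁻ u, π' x * (g' u * (R x u ^ (2:ℝ) * φ (x + u) ^ (2:ℝ))))
        = ∫⁻ u, ∫⁻ x, π' x * (g' u * (R x u ^ (2:ℝ) * φ (x + u) ^ (2:ℝ))) := by
      apply lintegral_lintegral_swap
      exact ((hπ'meas.comp measurable_fst).mul hJmeas).aemeasurable
    have c6 : ∀ u : ℝ, (∫⁻ x, π' x * (g' u * (R x u ^ (2:ℝ) * φ (x + u) ^ (2:ℝ))))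
        = g' u * N := by
      intro u
      have d1 : ∀ x : ℝ, π' x * (g' u * (R x u ^ (2:ℝ) * φ (x + u) ^ (2:ℝ)))
          = g' u * (π' (x + u) * φ (x + u) ^ (2:ℝ)) := by
        intro x
        have hR2 : R x u ^ (2:ℝ) = ENNReal.ofReal (π (x + u) / π x) := by
          simp only [hRdef]
          rw [show (2:ℝ) = ((2:ℕ) : ℝ) by norm_num, ENNReal.rpow_natCast,
            ← ENNReal.ofReal_pow (Real.sqrt_nonneg _),
            Real.sq_sqrt (div_nonneg (hπpos _).le (hπpos _).le)]
        have hππ : π' x * ENNReal.ofReal (π (x + u) / π x) = π' (x + u) := by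
          simp only [hπ'def]
          rw [← ENNReal.ofReal_mul (hπpos x).le, mul_comm (π x),
            div_mul_cancel₀ _ (hπpos x).ne']
        calc π' x * (g' u * (R x u ^ (2:ℝ) * φ (x + u) ^ (2:ℝ)))
            = g' u * (π' x * R x u ^ (2:ℝ) * φ (x + u) ^ (2:ℝ)) := by ring
          _ = g' u * (π' (x + u) * φ (x + u) ^ (2:ℝ)) := by rw [hR2, hππ]
      simp_rw [d1]
      rw [lintegral_const_mul' (g' u) _ ENNReal.ofReal_ne_top]
      congr 1
      have d2 : (∫⁻ x, π' (x + u) * φ (x + u) ^ (2:ℝ))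
          = ∫⁻ x, π' x * φ x ^ (2:ℝ) :=
        lintegral_add_right_eq_self (fun x => π' x * φ x ^ (2:ℝ)) u
      rw [d2, hNdef, hμd,
        lintegral_withDensity_eq_lintegral_mul volume hπ'meas (hφmeas.pow_const _)]
      rfl
    calc (∫⁻ x, (‖G₀ x‖₊ : ℝ≥0∞) ^ (2:ℝ) ∂(piMeas π))
        ≤ ∫⁻ x, B * W x ∂(piMeas π) := c1
      _ = B * ∫⁻ x, W x ∂(piMeas π) := c2
      _ = B * ∫⁻ u, ∫⁻ x, π' x * (g' u * (R x u ^ (2:ℝ) * φ (x + u) ^ (2:ℝ))) := by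
          rw [c3, c4, c5]
      _ = B * ∫⁻ u, g' u * N := by rw [lintegral_congr c6]
      _ = B * (B * N) := by rw [lintegral_mul_const' N g' hNne]
  have hfinal : eLpNorm G₀ 2 (piMeas π) ≤ B * N ^ (1/2:ℝ) := by
    rw [eLpNorm_eq_lintegral_rpow_enorm_toReal two_ne_zero ENNReal.ofNat_ne_top]
    simp only [ENNReal.toReal_ofNat, enorm_eq_nnnorm]
    calc (∫⁻ x, (‖G₀ x‖₊ : ℝ≥0∞) ^ (2:ℝ) ∂(piMeas π)) ^ (1/(2:ℝ))
        ≤ (B * (B * N)) ^ (1/(2:ℝ)) := ENNReal.rpow_le_rpow main (by norm_num)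
      _ = B * N ^ (1/(2:ℝ)) := by
          rw [ENNReal.mul_rpow_of_nonneg _ _ (by norm_num : (0:ℝ) ≤ 1/2),
            ENNReal.mul_rpow_of_nonneg _ _ (by norm_num : (0:ℝ) ≤ 1/2),
            ← mul_assoc, ← ENNReal.rpow_add_of_nonneg _ _ (by norm_num) (by norm_num)]
          norm_num [ENNReal.rpow_one]
  exact hfinal

set_option maxHeartbeats 2000000 in
theorem Tac_norm_le_beta
    (π : ℝ → ℝ) (hπpos : ∀ x, 0 < π x) (hπcont : Continuous π)
    (hπprob : ∫ x, π x = 1)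
    (q : ℝ → ℝ → ℝ) (hqnn : ∀ x y, 0 ≤ q x y) (hqbdd : ∃ M, ∀ x y, q x y ≤ M)
    (hqcont : Continuous fun p : ℝ × ℝ => q p.1 p.2) (hqprob : ∀ x, ∫ y, q x y = 1)
    (s : ℝ) (hs : 0 < s) (hrange : ∀ x u : ℝ, s < |u| → q x (x + u) = 0)
    (a : ℝ) (ha : 0 < a)
    (Tac : Lp ℂ 2 (piMeas π) →L[ℂ] Lp ℂ 2 (piMeas π))
    (hTac : ∀ f : Lp ℂ 2 (piMeas π),
      ⇑(Tac f) =ᵐ[piMeas π]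
        fun x => if a < |x| then (∫ y, (mhT π q x y : ℂ) * f y) else 0) :
    ‖Tac‖ ≤ ∫ u in (-s)..s,
      sSup ((fun x => Real.sqrt (mhT π q x (x + u) * mhT π q (x + u) x)) ''
        {x | a < |x|}) := by
  classical
  obtain ⟨M, hM⟩ := hqbdd
  set t : ℝ → ℝ → ℝ := mhT π q with htdef
  set S : Set ℝ := {x | a < |x|} with hSdef
  set g : ℝ → ℝ := fun u =>
    sSup ((fun x => Real.sqrt (t x (x + u) * t (x + u) x)) '' S) with hgdef
  set β : ℝ := ∫ u in (-s)..s, g u with hβdef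
  show ‖Tac‖ ≤ β
  -- basic facts about t
  set M₀ : ℝ := max M 0 with hM₀def
  have hM₀ : 0 ≤ M₀ := le_max_right _ _
  have ht_nonneg : ∀ x y, 0 ≤ t x y := fun x y =>
    le_min (hqnn x y) (div_nonneg (mul_nonneg (hπpos y).le (hqnn y x)) (hπpos x).le)
  have ht_le : ∀ x y, t x y ≤ M₀ :=
    fun x y => (min_le_left _ _).trans ((hM x y).trans (le_max_left _ _))
  have hF_nonneg : ∀ x u, 0 ≤ Real.sqrt (t x (x + u) * t (x + u) x) :=
    fun x u => Real.sqrt_nonneg _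
  have hF_le : ∀ x u, Real.sqrt (t x (x + u) * t (x + u) x) ≤ M₀ := by
    intro x u
    have h1 : t x (x + u) * t (x + u) x ≤ M₀ * M₀ :=
      mul_le_mul (ht_le _ _) (ht_le _ _) (ht_nonneg _ _) hM₀
    exact (Real.sqrt_le_sqrt h1).trans_eq (Real.sqrt_mul_self hM₀)
  -- the set S
  have hS_open : IsOpen S := isOpen_lt continuous_const continuous_abs
  have hx₀ : (a + 1 : ℝ) ∈ S := by
    simp only [hSdef, Set.mem_setOf_eq]
    rw [abs_of_pos (by linarith)]; linarith
  have hS_ne : S.Nonempty := ⟨a + 1, hx₀⟩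
  have hbdd : ∀ u, BddAbove ((fun x => Real.sqrt (t x (x + u) * t (x + u) x)) '' S) := by
    intro u
    refine ⟨M₀, ?_⟩
    rintro y ⟨x, -, rfl⟩
    exact hF_le x u
  have hg_nonneg : ∀ u, 0 ≤ g u := fun u =>
    (hF_nonneg (a + 1) u).trans (le_csSup (hbdd u) (Set.mem_image_of_mem _ hx₀))
  have hg_le : ∀ u, g u ≤ M₀ := by
    intro u
    refine csSup_le (hS_ne.image _) ?_
    rintro y ⟨x, -, rfl⟩
    exact hF_le x u
  have hFg : ∀ u x, x ∈ S → Real.sqrt (t x (x + u) * t (x + u) x) ≤ g u :=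
    fun u x hx => le_csSup (hbdd u) (Set.mem_image_of_mem _ hx)
  have hg0 : ∀ u, s < |u| → g u = 0 := by
    intro u hu
    refine le_antisymm ?_ (hg_nonneg u)
    refine csSup_le (hS_ne.image _) ?_
    rintro y ⟨x, -, rfl⟩
    have h1 : t x (x + u) = 0 :=
      le_antisymm ((min_le_left _ _).trans_eq (hrange x u hu)) (ht_nonneg _ _)
    show Real.sqrt (t x (x + u) * t (x + u) x) ≤ 0
    rw [h1, zero_mul, Real.sqrt_zero]
  -- detailed balance
  have hdb : ∀ x y, t x y * π x = t y x * π y := by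
    intro x y
    have h1 : t x y * π x = min (q x y * π x) (π y * q y x) := by
      rw [htdef]; unfold mhT
      rw [min_mul_of_nonneg _ _ (hπpos x).le, div_mul_cancel₀ _ (hπpos x).ne']
    have h2 : t y x * π y = min (q y x * π y) (π x * q x y) := by
      rw [htdef]; unfold mhT
      rw [min_mul_of_nonneg _ _ (hπpos y).le, div_mul_cancel₀ _ (hπpos y).ne']
    rw [h1, h2, min_comm (q y x * π y) (π x * q x y), mul_comm (π x) (q x y),
      mul_comm (q y x) (π y)]
  have hsqrt : ∀ x y, t x y = Real.sqrt (t x y * t y x) * Real.sqrt (π y / π x) := by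
    intro x y
    have h0 : t x y * t y x * (π y / π x) = t x y ^ 2 := by
      have h1 : t y x * (π y / π x) = t x y := by
        rw [← mul_div_assoc, hdb y x, mul_div_cancel_right₀ _ (hπpos x).ne']
      rw [mul_assoc, h1, sq]
    calc t x y = Real.sqrt (t x y ^ 2) := (Real.sqrt_sq (ht_nonneg x y)).symm
      _ = Real.sqrt (t x y * t y x * (π y / π x)) := by rw [h0]
      _ = Real.sqrt (t x y * t y x) * Real.sqrt (π y / π x) :=
          Real.sqrt_mul (mul_nonneg (ht_nonneg _ _) (ht_nonneg _ _)) _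
  -- continuity of the kernel
  have htcont : Continuous fun p : ℝ × ℝ => t p.1 p.2 := by
    rw [htdef]; unfold mhT
    exact hqcont.min (((hπcont.comp continuous_snd).mul
      (hqcont.comp continuous_swap)).div (hπcont.comp continuous_fst)
      fun p => (hπpos p.1).ne')
  have hFcont : Continuous fun p : ℝ × ℝ =>
      Real.sqrt (t p.1 (p.1 + p.2) * t (p.1 + p.2) p.1) := by
    apply Continuous.sqrt
    exact (htcont.comp (continuous_fst.prodMk (continuous_fst.add continuous_snd))).mul
      (htcont.comp ((continuous_fst.add continuous_snd).prodMk continuous_fst))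
  -- countable representation of g and measurability
  set e : ℚ → ℝ := fun r => if a < |(r : ℝ)| then (r : ℝ) else a + 1 with hedef
  have he : ∀ r, e r ∈ S := by
    intro r
    simp only [hedef]
    split_ifs with hr
    · exact hr
    · exact hx₀
  have hbddR : ∀ u, BddAbove (Set.range fun r : ℚ =>
      Real.sqrt (t (e r) (e r + u) * t (e r + u) (e r))) := by
    intro u
    refine ⟨M₀, ?_⟩
    rintro y ⟨r, rfl⟩
    exact hF_le _ u
  have key : ∀ u, g u = ⨆ r : ℚ, Real.sqrt (t (e r) (e r + u) * t (e r + u) (e r)) := by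
    intro u
    apply le_antisymm
    · refine csSup_le (hS_ne.image _) ?_
      rintro y ⟨x, hx, rfl⟩
      show Real.sqrt (t x (x + u) * t (x + u) x) ≤ _
      obtain ⟨δ, hδpos, hδ⟩ := Metric.isOpen_iff.1 hS_open x hx
      have hex : ∀ n : ℕ, ∃ r : ℚ, x < (r : ℝ) ∧ (r : ℝ) < x + min δ (1 / ((n : ℝ) + 1)) := by
        intro n
        apply exists_rat_btwn
        have h0 : 0 < min δ (1 / ((n : ℝ) + 1)) := lt_min hδpos (by positivity)
        linarith
      choose r hr1 hr2 using hex
      have hrS : ∀ n, (r n : ℝ) ∈ S := by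
        intro n
        apply hδ
        rw [Metric.mem_ball, Real.dist_eq, abs_of_pos (by linarith [hr1 n])]
        exact lt_of_lt_of_le (by linarith [hr2 n]) (min_le_left _ _)
      have heq : ∀ n, e (r n) = ((r n : ℚ) : ℝ) := by
        intro n
        simp only [hedef]
        exact if_pos (show a < |((r n : ℚ) : ℝ)| from hrS n)
      have htend : Tendsto (fun n : ℕ => ((r n : ℚ) : ℝ)) atTop (𝓝 x) := by
        have hub : Tendsto (fun n : ℕ => x + 1 / ((n : ℝ) + 1)) atTop (𝓝 x) := by
          have h2 := Tendsto.const_add x tendsto_one_div_add_atTop_nhds_zero_nat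
          simpa using h2
        refine tendsto_of_tendsto_of_tendsto_of_le_of_le tendsto_const_nhds hub
          (fun n => (hr1 n).le) (fun n => ?_)
        exact le_of_lt (lt_of_lt_of_le (hr2 n)
          (add_le_add_right (min_le_right _ _) x))
      have hFt : Tendsto (fun n : ℕ =>
          Real.sqrt (t (e (r n)) (e (r n) + u) * t (e (r n) + u) (e (r n)))) atTop
          (𝓝 (Real.sqrt (t x (x + u) * t (x + u) x))) := by
        have hc : Continuous fun z : ℝ => Real.sqrt (t z (z + u) * t (z + u) z) :=
          hFcont.comp (continuous_id.prodMk continuous_const)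
        have h3 := (hc.tendsto x).comp htend
        simp only [heq]
        simpa [Function.comp_def] using h3
      exact le_of_tendsto hFt (Eventually.of_forall fun n => le_ciSup (hbddR u) (r n))
    · refine ciSup_le fun r => ?_
      exact le_csSup (hbdd u) (Set.mem_image_of_mem _ (he r))
  set g' : ℝ → ℝ≥0∞ := fun u =>
    ⨆ r : ℚ, ENNReal.ofReal (Real.sqrt (t (e r) (e r + u) * t (e r + u) (e r))) with hg'def
  have hg'_eq : ∀ u, g' u = ENNReal.ofReal (g u) := by
    intro u
    rw [key u, hg'def]
    exact (Monotone.map_ciSup_of_continuousAt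
      (ENNReal.continuous_ofReal.continuousAt)
      (fun _ _ h => ENNReal.ofReal_le_ofReal h) (hbddR u)).symm
  have hg'meas : Measurable g' := by
    refine Measurable.iSup fun r => ?_
    exact (ENNReal.continuous_ofReal.comp
      (hFcont.comp (continuous_const.prodMk continuous_id))).measurable
  have hgmeas : Measurable g := by
    have : g = fun u => (g' u).toReal := funext fun u => by
      rw [hg'_eq u, ENNReal.toReal_ofReal (hg_nonneg u)]
    rw [this]
    exact hg'meas.ennreal_toReal
  -- β and B
  have hβ_nonneg : 0 ≤ β := by
    rw [hβdef]
    exact intervalIntegral.integral_nonneg (by linarith) fun u _ => hg_nonneg u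
  set B : ℝ≥0∞ := ∫⁻ u, g' u with hBdef
  have hB : B = ENNReal.ofReal β := by
    have hind : g' = (Set.Icc (-s) s).indicator fun u => ENNReal.ofReal (g u) := by
      funext u
      by_cases hu : u ∈ Set.Icc (-s) s
      · rw [Set.indicator_of_mem hu, hg'_eq u]
      · rw [Set.indicator_of_notMem hu, hg'_eq u, hg0 u ?_, ENNReal.ofReal_zero]
        simp only [Set.mem_Icc, not_and_or, not_le] at hu
        rcases le_or_gt u 0 with h | h
        · rw [abs_of_nonpos h]
          rcases hu with h1 | h2
          · linarith
          · linarith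
        · rw [abs_of_pos h]
          rcases hu with h1 | h2
          · linarith
          · linarith
    have hgInt : IntegrableOn g (Set.Ioc (-s) s) := by
      refine Integrable.mono' (g := fun _ => M₀) ?_ hgmeas.aestronglyMeasurable ?_
      · exact integrableOn_const measure_Ioc_lt_top.ne
      · exact ae_of_all _ fun u => by
          rw [Real.norm_eq_abs, abs_of_nonneg (hg_nonneg u)]; exact hg_le u
    rw [hBdef, hind, lintegral_indicator measurableSet_Icc _,
      ← Measure.restrict_congr_set Ioc_ae_eq_Icc,
      ← ofReal_integral_eq_lintegral_ofReal hgInt (ae_of_all _ hg_nonneg),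
      hβdef, intervalIntegral.integral_of_le (by linarith : -s ≤ s)]
  have hBne : B ≠ ⊤ := by rw [hB]; exact ENNReal.ofReal_ne_top
  -- main estimate
  refine ContinuousLinearMap.opNorm_le_bound _ hβ_nonneg fun f => ?_
  have hπ'meas : Measurable fun x => ENNReal.ofReal (π x) := hπcont.measurable.ennreal_ofReal
  have hvac : (volume : Measure ℝ) ≪ piMeas π := by
    refine Measure.AbsolutelyContinuous.mk fun A hA hμA => ?_
    rw [show piMeas π = volume.withDensity (fun x => ENNReal.ofReal (π x)) from rfl,
      withDensity_apply _ hA] at hμA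
    have h2 : ∀ᵐ x ∂(volume : Measure ℝ), x ∈ A → ENNReal.ofReal (π x) = 0 :=
      (setLIntegral_eq_zero_iff hA hπ'meas).1 hμA
    have h3 : ∀ᵐ x ∂(volume : Measure ℝ), x ∉ A := by
      filter_upwards [h2] with x hx
      intro hxA
      exact (ENNReal.ofReal_pos.2 (hπpos x)).ne' (hx hxA)
    simpa using ae_iff.1 h3
  have hfm : AEStronglyMeasurable (⇑f) (piMeas π) := (Lp.memLp f).aestronglyMeasurable
  set f₀ : ℝ → ℂ := hfm.mk ⇑f with hf₀def
  have hf₀meas : Measurable f₀ := hfm.stronglyMeasurable_mk.measurable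
  have hff₀μ : ⇑f =ᵐ[piMeas π] f₀ := hfm.ae_eq_mk
  have hff₀ : ⇑f =ᵐ[volume] f₀ := hvac.ae_eq hff₀μ
  set N : ℝ≥0∞ := ∫⁻ x, (‖f₀ x‖₊ : ℝ≥0∞) ^ (2:ℝ) ∂(piMeas π) with hNdef
  have hNf : eLpNorm (⇑f) 2 (piMeas π) = N ^ (1/2 : ℝ) := by
    rw [eLpNorm_congr_ae hff₀μ,
      eLpNorm_eq_lintegral_rpow_enorm_toReal two_ne_zero ENNReal.ofNat_ne_top]
    simp only [ENNReal.toReal_ofNat, hNdef, enorm_eq_nnnorm]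
  have hNne : N ≠ ⊤ := by
    intro hN
    have h1 : eLpNorm (⇑f) 2 (piMeas π) ≠ ⊤ := Lp.eLpNorm_ne_top f
    rw [hNf, hN, ENNReal.top_rpow_of_pos (by norm_num)] at h1
    exact h1 rfl
  have htb : ∀ x u, a < |x| → t x (x + u) ≤ g u * Real.sqrt (π (x + u) / π x) := by
    intro x u hx
    rw [hsqrt x (x + u)]
    exact mul_le_mul_of_nonneg_right (hFg u x hx) (Real.sqrt_nonneg _)
  have hBg : (∫⁻ u, ENNReal.ofReal (g u)) = B := by
    rw [hBdef]
    exact lintegral_congr fun u => (hg'_eq u).symm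
  have hBgne : (∫⁻ u, ENNReal.ofReal (g u)) ≠ ⊤ := by rw [hBg]; exact hBne
  have key2 := schur_helper π hπpos hπcont a t ht_nonneg g hg_nonneg hgmeas htb hBgne
    f₀ hf₀meas hNne
  have hTf : ⇑(Tac f) =ᵐ[piMeas π]
      fun x => if a < |x| then (∫ y, (t x y : ℂ) * f₀ y) else 0 := by
    refine (hTac f).trans (Filter.EventuallyEq.of_eq (funext fun x => ?_))
    by_cases hx : a < |x|
    · rw [if_pos hx, if_pos hx]
      refine integral_congr_ae (hff₀.mono fun y hy => ?_)
      dsimp only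
      rw [hy]
    · rw [if_neg hx, if_neg hx]
  have hNorm : eLpNorm (⇑(Tac f)) 2 (piMeas π)
      ≤ ENNReal.ofReal β * eLpNorm (⇑f) 2 (piMeas π) := by
    rw [eLpNorm_congr_ae hTf, hNf]
    calc eLpNorm (fun x => if a < |x| then (∫ y, (t x y : ℂ) * f₀ y) else 0) 2 (piMeas π)
        ≤ (∫⁻ u, ENNReal.ofReal (g u)) * N ^ (1/2 : ℝ) := key2
      _ = ENNReal.ofReal β * N ^ (1/2 : ℝ) := by rw [hBg, hB]
  have hfin : ENNReal.ofReal β * eLpNorm (⇑f) 2 (piMeas π) ≠ ⊤ :=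
    ENNReal.mul_ne_top ENNReal.ofReal_ne_top (Lp.eLpNorm_ne_top f)
  calc ‖Tac f‖ = (eLpNorm (⇑(Tac f)) 2 (piMeas π)).toReal := by rw [Lp.norm_def]
    _ ≤ (ENNReal.ofReal β * eLpNorm (⇑f) 2 (piMeas π)).toReal :=
        ENNReal.toReal_mono hfin hNorm
    _ = β * ‖f‖ := by
        rw [ENNReal.toReal_mul, ENNReal.toReal_ofReal hβ_nonneg, Lp.norm_def]
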